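/- Suppose an operator R on V⊗V⊗V-type tensor legs satisfies the Yang–Baxter equation R₁₂R₁₃R₂₃ = R₂₃R₁₃R₁₂, and G is a family of invertible diagonal operators G_{ij} defining the gauge transformation S_{ij} = G_{ji}⁻¹ R_{ij} G_{ij}. Assume that for distinct i,j,k there exist invertible diagonal operators A_{i,jk} acting on legs j,k satisfying: G_{ik}⁻¹R_{jk}G_{ik} = A_{i,jk}R_{jk}A_{i,jk}⁻¹, G_{ij}⁻¹R_{jk}G_{ij} = A_{i,jk}⁻¹R_{jk}A_{i,jk}, G_{ki}⁻¹R_{jk}G_{ki} = A_{i,jk}⁻¹R_{jk}A_{i,jk}, and G_{ji}⁻¹R_{jk}G_{ji} = A_{i,jk}R_{jk}A_{i,jk}⁻¹, and that moreover the commutation relations R₁₂G₃₁⁻¹G₃₂⁻¹ = G₃₁⁻¹G₃₂⁻¹R₁₂, G₁₂G₂₃R₂₃ = R₂₃G₁₂G₂₃, R₂₃G₃₁⁻¹G₂₁⁻¹ = G₂₁⁻¹G₃₁⁻¹R₂₃, G₂₃G₁₃R₁₂ = R₁₂G₁₃G₂₃, G₁₂R₁₃G₃₂⁻¹ = G₃₂⁻¹R₁₃G₁₂,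 and G₂₃R₁₃G₂₁⁻¹ = G₂₁⁻¹R₁₃G₂₃ hold, with all diagonal G operators with disjoint or equal index supports commuting. Then S also satisfies the Yang–Baxter equation: S₁₂S₁₃S₂₃ = S₂₃S₁₃S₁₂. -/
import Mathlib

private lemma yb_ext2 {M : Type*} [Monoid M] {a b c d : M} (h : a * b = c * d) (x : M) :
    a * (b * x) = c * (d * x) := by
  rw [← mul_assoc, h, mul_assoc]

private lemma yb_ext3 {M : Type*} [Monoid M] {a b c d e f : M} (h : a * b * c = d * e * f)
    (x : M) : a * (b * (c * x)) = d * (e * (f * x)) := by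
  rw [← mul_assoc, ← mul_assoc, h, mul_assoc, mul_assoc]

private lemma yb_conj {M : Type*} [Monoid M] (u w : Mˣ) (x : M)
    (h : (↑u⁻¹ : M) * x * ↑u = (↑w⁻¹ : M) * x * ↑w) :
    x * ((u : M) * ↑w⁻¹) = ((u : M) * ↑w⁻¹) * x := by
  calc x * ((u : M) * ↑w⁻¹)
      = (u : M) * ((↑u⁻¹ : M) * x * ↑u) * ↑w⁻¹ := by
        simp only [mul_assoc, Units.mul_inv_cancel_left]
    _ = (u : M) * ((↑w⁻¹ : M) * x * ↑w) * ↑w⁻¹ := by rw [h]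
    _ = ((u : M) * ↑w⁻¹) * x := by
        simp only [mul_assoc, Units.mul_inv, mul_one]

theorem stmt6 {M : Type*} [Monoid M]
    (R : Fin 3 → Fin 3 → M) (G : Fin 3 → Fin 3 → Mˣ) (A : Fin 3 → Fin 3 → Fin 3 → Mˣ)
    (hYB : R 0 1 * R 0 2 * R 1 2 = R 1 2 * R 0 2 * R 0 1)
    (hA : ∀ i j k : Fin 3, i ≠ j → j ≠ k → i ≠ k →
      (((G i k)⁻¹ : Mˣ) : M) * R j k * (G i k : M)
          = (A i j k : M) * R j k * (((A i j k)⁻¹ : Mˣ) : M) ∧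
      (((G i j)⁻¹ : Mˣ) : M) * R j k * (G i j : M)
          = (((A i j k)⁻¹ : Mˣ) : M) * R j k * (A i j k : M) ∧
      (((G k i)⁻¹ : Mˣ) : M) * R j k * (G k i : M)
          = (((A i j k)⁻¹ : Mˣ) : M) * R j k * (A i j k : M) ∧
      (((G j i)⁻¹ : Mˣ) : M) * R j k * (G j i : M)
          = (A i j k : M) * R j k * (((A i j k)⁻¹ : Mˣ) : M))
    (h1 : R 0 1 * (((G 2 0)⁻¹ : Mˣ) : M) * (((G 2 1)⁻¹ : Mˣ) : M)
        = (((G 2 0)⁻¹ : Mˣ) : M) * (((G 2 1)⁻¹ : Mˣ) : M) * R 0 1)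
    (h2 : (G 0 1 : M) * (G 1 2 : M) * R 1 2 = R 1 2 * (G 0 1 : M) * (G 1 2 : M))
    (h3 : R 1 2 * (((G 2 0)⁻¹ : Mˣ) : M) * (((G 1 0)⁻¹ : Mˣ) : M)
        = (((G 1 0)⁻¹ : Mˣ) : M) * (((G 2 0)⁻¹ : Mˣ) : M) * R 1 2)
    (h4 : (G 1 2 : M) * (G 0 2 : M) * R 0 1 = R 0 1 * (G 0 2 : M) * (G 1 2 : M))
    (h5 : (G 0 1 : M) * R 0 2 * (((G 2 1)⁻¹ : Mˣ) : M)
        = (((G 2 1)⁻¹ : Mˣ) : M) * R 0 2 * (G 0 1 : M))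
    (h6 : (G 1 2 : M) * R 0 2 * (((G 1 0)⁻¹ : Mˣ) : M)
        = (((G 1 0)⁻¹ : Mˣ) : M) * R 0 2 * (G 1 2 : M))
    (hGcomm : ∀ i j k l : Fin 3, (G i j : M) * (G k l : M) = (G k l : M) * (G i j : M)) :
    ((((G 1 0)⁻¹ : Mˣ) : M) * R 0 1 * (G 0 1 : M)) *
      ((((G 2 0)⁻¹ : Mˣ) : M) * R 0 2 * (G 0 2 : M)) *
      ((((G 2 1)⁻¹ : Mˣ) : M) * R 1 2 * (G 1 2 : M))
    = ((((G 2 1)⁻¹ : Mˣ) : M) * R 1 2 * (G 1 2 : M)) *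
      ((((G 2 0)⁻¹ : Mˣ) : M) * R 0 2 * (G 0 2 : M)) *
      ((((G 1 0)⁻¹ : Mˣ) : M) * R 0 1 * (G 0 1 : M)) := by
  have hG : ∀ i j k l : Fin 3, Commute ((G i j : Mˣ) : M) ((G k l : Mˣ) : M) := hGcomm
  obtain ⟨e1, e2, e3, e4⟩ := hA 0 1 2 (by decide) (by decide) (by decide)
  -- R 1 2 commutes with G02 * G10⁻¹ and with G01 * G20⁻¹
  have hc1 : Commute (R 1 2) ((G 0 2 : M) * (((G 1 0)⁻¹ : Mˣ) : M)) :=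
    yb_conj (G 0 2) (G 1 0) (R 1 2) (e1.trans e4.symm)
  have hc2 : Commute (R 1 2) ((G 0 1 : M) * (((G 2 0)⁻¹ : Mˣ) : M)) :=
    yb_conj (G 0 1) (G 2 0) (R 1 2) (e2.trans e3.symm)
  -- R 1 2 commutes with G20⁻¹ * G10⁻¹, hence with G10 * G20
  have hinv : (((G 1 0)⁻¹ : Mˣ) : M) * (((G 2 0)⁻¹ : Mˣ) : M)
      = (((G 2 0)⁻¹ : Mˣ) : M) * (((G 1 0)⁻¹ : Mˣ) : M) :=
    (((hG 1 0 2 0).units_inv_left).units_inv_right).eq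
  have hc3 : Commute (R 1 2) ((((G 2 0)⁻¹ : Mˣ) : M) * (((G 1 0)⁻¹ : Mˣ) : M)) := by
    show R 1 2 * _ = _
    rw [← mul_assoc, h3, mul_assoc, ← mul_assoc, hinv]
  have hc3u : Commute (R 1 2) (((G 1 0 * G 2 0)⁻¹ : Mˣ) : M) := by
    simpa [mul_inv_rev, Units.val_mul] using hc3
  have hc4 : Commute (R 1 2) ((G 1 0 : M) * (G 2 0 : M)) := by
    have := hc3u.units_inv_right
    simpa [Units.val_mul] using this
  -- hence R 1 2 commutes with G01 * G02
  have hprod : ((G 0 1 : M) * (((G 2 0)⁻¹ : Mˣ) : M)) *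
      (((G 0 2 : M) * (((G 1 0)⁻¹ : Mˣ) : M)) * ((G 1 0 : M) * (G 2 0 : M)))
      = (G 0 1 : M) * (G 0 2 : M) := by
    rw [mul_assoc (G 0 2 : M), Units.inv_mul_cancel_left, mul_assoc (G 0 1 : M),
      ← mul_assoc (((G 2 0)⁻¹ : Mˣ) : M), ← ((hG 0 2 2 0).units_inv_right).eq,
      Units.inv_mul_cancel_right]
  have key : Commute (R 1 2) ((G 0 1 : M) * (G 0 2 : M)) := by
    have := hc2.mul_right (hc1.mul_right hc4)
    rwa [hprod] at this
  -- extended rewrite rules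
  have wkey : ∀ x : M, (G 0 1 : M) * ((G 0 2 : M) * (R 1 2 * x))
      = R 1 2 * ((G 0 1 : M) * ((G 0 2 : M) * x)) := by
    intro x
    calc (G 0 1 : M) * ((G 0 2 : M) * (R 1 2 * x))
        = ((G 0 1 : M) * (G 0 2 : M)) * (R 1 2 * x) := (mul_assoc _ _ _).symm
      _ = R 1 2 * (((G 0 1 : M) * (G 0 2 : M)) * x) := yb_ext2 key.eq.symm x
      _ = R 1 2 * ((G 0 1 : M) * ((G 0 2 : M) * x)) := by rw [mul_assoc]
  have w1 := fun x => yb_ext2 ((hG 0 1 2 0).units_inv_right).eq x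
  have w2 := fun x => yb_ext2 ((hG 0 2 2 1).units_inv_right).eq x
  have w5 := fun x => yb_ext3 h5 x
  have wh1 := fun x => yb_ext3 h1 x
  have wyb := fun x => yb_ext3 hYB x
  have v1 := fun x => yb_ext2 ((hG 1 2 2 0).units_inv_right).eq x
  have v2 := fun x => yb_ext2 ((hG 0 2 1 0).units_inv_right).eq x
  have v6 := fun x => yb_ext3 h6 x
  have vh3 := fun x => yb_ext3 h3 x
  have vh4 := fun x => yb_ext3 h4 x
  have ca31 := fun x => yb_ext2 (((hG 2 1 1 0).units_inv_left).units_inv_right).eq x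
  have ca32 := fun x => yb_ext2 (((hG 2 1 2 0).units_inv_left).units_inv_right).eq x
  have cb31 : (G 1 2 : M) * (G 0 1 : M) = (G 0 1 : M) * (G 1 2 : M) := hGcomm 1 2 0 1
  have cb21 := fun x => yb_ext2 (hGcomm 0 2 0 1) x
  simp only [mul_assoc]
  rw [w1, w2, w5, wh1, wkey, wyb, v1, v2, v6, vh3, vh4, ca31, ca32, cb31, cb21]
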